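/- Let M_r be the induced L_r-module U(L_r) ⊗_{U(L_r^+)} ℂ1, where L_r^+ is spanned by the v^{ij}(m,n) with m ≥ 0 or n ≥ 0 together with ℂ, annihilating (resp. acting by scalars on) the vacuum 1. Then for every positive integer m and nonnegative integer ν, in M_r one has v(m,m)·v(−m,−m)^ν·1 = 2m²ν(r + 2ν − 2)·v(−m,−m)^{ν−1}·1, where v(a,b) = v^{11}(a,b). -/

import Mathlib

/-- The contraction scalar `[v^j(n), v^l(t)] = δ_{j,l} δ_{n+t,0} n` of the Heisenberg
algebra (with `c = 1`). -/
def kapC {d : ℕ} (j l : Fin d) (n t : ℤ) : ℂ :=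
  if j = l ∧ n + t = 0 then (n : ℂ) else 0

/-- The scalar `σ(i,k,m,s)` such that `v^{ik}(m,s) = (normally ordered part) + σ(i,k,m,s)`:
it equals `m` when `i = k`, `s = −m` and `m > 0`, and `0` otherwise. -/
def sigC {d : ℕ} (i k : Fin d) (m s : ℤ) : ℂ :=
  if i = k ∧ m + s = 0 ∧ 0 < m then (m : ℂ) else 0

/-- A representation of (the universal enveloping algebra of) the Lie algebra `L_r` in an
associative `ℂ`-algebra `A`: a family of elements `ρ i j m n` playing the role of the
quadratic elements `v^{ij}(m,n)`, subject to the symmetry relations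
`v^{ij}(m,n) = v^{ji}(n,m)` (for `i ≠ j` or `m ≠ −n`), `v^{ii}(m,−m) = v^{ii}(−m,m) + m`,
and the commutation relations of `L_r`:
`[v^{ij}(m,n), v^{kl}(s,t)]_r = [b,d] v^{ik}(m,s) + [b,c] v^{il}(m,t) + [a,d] v^{kj}(s,n)
+ [a,c] v^{lj}(t,n) + (r−1)·(scalar part)`, i.e. the plain Wick-formula commutator of
`U(ĥ)/⟨c−1⟩` with its central (`π₂`) component multiplied by `r`. -/
structure LrAlg (d : ℕ) (r : ℂ) (A : Type*) [Ring A] [Algebra ℂ A] where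
  ρ : Fin d → Fin d → ℤ → ℤ → A
  symm : ∀ (i j : Fin d) (m n : ℤ), i ≠ j ∨ m ≠ -n → ρ i j m n = ρ j i n m
  symm' : ∀ (i : Fin d) (m : ℤ), ρ i i m (-m) = ρ i i (-m) m + algebraMap ℂ A (m : ℂ)
  comm : ∀ (i j k l : Fin d) (m n s t : ℤ),
    ρ i j m n * ρ k l s t - ρ k l s t * ρ i j m n
      = kapC j l n t • ρ i k m s + kapC j k n s • ρ i l m t
        + kapC i l m t • ρ k j s n + kapC i k m s • ρ l j t n
        + algebraMap ℂ A ((r - 1) *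
            (kapC j l n t * sigC i k m s + kapC j k n s * sigC i l m t
              + kapC i l m t * sigC k j s n + kapC i k m s * sigC l j t n))

/-- in the induced `L_r`-module `M_r` (here: any representation of `L_r` by
endomorphisms of a `ℂ`-vector space with a vacuum vector `one` annihilated by all
`v^{ij}(m,n)` with `m ≥ 0` or `n ≥ 0`), for every positive integer `m` and nonnegative
integer `ν` one has `v(m,m)·v(−m,−m)^ν·1 = 2m²ν(r + 2ν − 2)·v(−m,−m)^{ν−1}·1`, where
`v(a,b) = v^{11}(a,b)`. -/
theorem stmt_9 (d : ℕ) (hd : 2 ≤ d) (r : ℂ) (M : Type*) [AddCommGroup M] [Module ℂ M]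
    (S : LrAlg d r (Module.End ℂ M)) (one : M)
    (hvac : ∀ (i j : Fin d) (m n : ℤ), 0 ≤ m ∨ 0 ≤ n → S.ρ i j m n one = 0)
    (m : ℤ) (hm : 0 < m) (ν : ℕ) :
    S.ρ ⟨0, by omega⟩ ⟨0, by omega⟩ m m
        ((S.ρ ⟨0, by omega⟩ ⟨0, by omega⟩ (-m) (-m) ^ ν) one)
      = (2 * (m : ℂ) ^ 2 * (ν : ℂ) * (r + 2 * (ν : ℂ) - 2)) •
        ((S.ρ ⟨0, by omega⟩ ⟨0, by omega⟩ (-m) (-m) ^ (ν - 1)) one) := by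
  have hmne : m ≠ 0 := hm.ne'
  set i0 : Fin d := ⟨0, by omega⟩ with hi0
  set A := S.ρ i0 i0 m m with hA
  set B := S.ρ i0 i0 (-m) (-m) with hB
  set H := S.ρ i0 i0 (-m) m with hH
  -- kapC / sigC values
  have k1 : kapC i0 i0 m (-m) = (m : ℂ) := by simp [kapC]
  have k2 : kapC i0 i0 (-m) (-m) = 0 := by
    simp only [kapC]
    rw [if_neg]
    rintro ⟨-, h⟩; omega
  have s1 : sigC i0 i0 m (-m) = (m : ℂ) := by simp [sigC, hm]
  have s2 : sigC (d := d) i0 i0 (-m) m = 0 := by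
    simp only [sigC]
    rw [if_neg]
    rintro ⟨-, -, h⟩; omega
  have s3 : sigC (d := d) i0 i0 (-m) (-m) = 0 := by
    simp only [sigC]
    rw [if_neg]
    rintro ⟨-, h, -⟩; omega
  -- bracket [H, B] = 2m • B
  have hHB : H * B - B * H = (2 * m : ℂ) • B := by
    have := S.comm i0 i0 i0 i0 (-m) m (-m) (-m)
    rw [k1, k2, s3] at this
    rw [hH, hB, this]
    simp only [mul_zero, zero_mul, add_zero, zero_smul, zero_add]
    rw [map_zero]
    module
  -- bracket [A, B] = 4m • H + 2rm²
  have hAB : A * B - B * A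
      = (4 * m : ℂ) • H + algebraMap ℂ (Module.End ℂ M) (2 * r * m ^ 2) := by
    have := S.comm i0 i0 i0 i0 m m (-m) (-m)
    rw [k1, s1, s2] at this
    have e1 : (m : ℂ) • algebraMap ℂ (Module.End ℂ M) (m : ℂ)
        = algebraMap ℂ (Module.End ℂ M) ((m : ℂ) * m) := by
      rw [map_mul, Algebra.smul_def]
    have e2 : algebraMap ℂ (Module.End ℂ M) (2 * r * (m : ℂ) ^ 2)
        = algebraMap ℂ (Module.End ℂ M) ((m : ℂ) * m)
          + algebraMap ℂ (Module.End ℂ M) ((m : ℂ) * m)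
          + algebraMap ℂ (Module.End ℂ M)
              ((r - 1) * ((m : ℂ) * m + (m : ℂ) * m + (m : ℂ) * 0 + (m : ℂ) * 0)) := by
      rw [← map_add, ← map_add]
      congr 1
      ring
    rw [hA, hB, this, S.symm' i0 m, ← hH, smul_add, e1, e2]
    module
  have hHone : H one = 0 := hvac i0 i0 (-m) m (Or.inr hm.le)
  have hAone : A one = 0 := hvac i0 i0 m m (Or.inl hm.le)
  have hHpow : ∀ k : ℕ, H ((B ^ k) one) = (2 * m * k : ℂ) • ((B ^ k) one) := by
    intro k
    induction k with
    | zero => simp [hHone]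
    | succ k ih =>
      have h := LinearMap.congr_fun hHB ((B ^ k) one)
      simp only [LinearMap.sub_apply, Module.End.mul_apply, LinearMap.smul_apply] at h
      have h' := sub_eq_iff_eq_add.mp h
      rw [pow_succ']
      simp only [Module.End.mul_apply]
      rw [h', ih, map_smul]
      rw [show ((2 : ℂ) * m) • B ((B ^ k) one) + (2 * (m : ℂ) * k) • B ((B ^ k) one)
          = (2 * (m : ℂ) * (k + 1)) • B ((B ^ k) one) by rw [← add_smul]; ring_nf]
      push_cast
      ring_nf
  induction ν with
  | zero => simp [hAone]
  | succ k ih =>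
    have h := LinearMap.congr_fun hAB ((B ^ k) one)
    simp only [LinearMap.sub_apply, Module.End.mul_apply, LinearMap.smul_apply,
      LinearMap.add_apply, Module.algebraMap_end_apply] at h
    have h' := sub_eq_iff_eq_add.mp h
    rw [pow_succ']
    simp only [Module.End.mul_apply]
    rw [h', ih, hHpow k, map_smul, Nat.add_sub_cancel]
    rcases Nat.eq_zero_or_pos k with hk | hk
    · subst hk
      push_cast
      module
    · have hk1 : k - 1 + 1 = k := Nat.succ_pred_eq_of_pos hk
      have hBk : B ((B ^ (k - 1)) one) = (B ^ k) one := by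
        conv_rhs => rw [← hk1, pow_succ']
        simp [Module.End.mul_apply]
      rw [hBk]
      push_cast
      module
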